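/- Let k ∈ N and A, B ∈ R, and let M0 be the (k+1)×(k+1) tridiagonal matrix with diagonal entries A, superdiagonal entries (ℓ+1)B, and subdiagonal entries −(k−ℓ)B (0-indexed). If k is even, then det(M0 − λI) = (A−λ)·((A−λ)² + (2B)²)((A−λ)² + (4B)²)···((A−λ)² + (kB)²). -/

import Mathlib

noncomputable section

/-- The `(k+1)×(k+1)` tridiagonal matrix with diagonal `A`, superdiagonal entries
`(ℓ+1)B` and subdiagonal entries `−(k−ℓ)B` (0-indexed). -/
def M0 (k : ℕ) (A B : ℝ) : Matrix (Fin (k+1)) (Fin (k+1)) ℝ :=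
  fun i j =>
    if (i : ℕ) = (j : ℕ) then A
    else if (j : ℕ) = (i : ℕ) + 1 then ((i : ℕ) + 1 : ℝ) * B
    else if (i : ℕ) = (j : ℕ) + 1 then -((k : ℝ) - (j : ℕ)) * B
    else 0

open Polynomial Complex

private def Pab (a b : ℕ) : Polynomial ℂ := (1 + C I * X)^a * (1 - C I * X)^b

private def Mc (k : ℕ) (A B : ℝ) : Matrix (Fin (k+1)) (Fin (k+1)) ℂ :=
  fun i j =>
    if (i : ℕ) = (j : ℕ) then (A:ℂ)
    else if (j : ℕ) = (i : ℕ) + 1 then (((i:ℕ):ℂ) + 1) * (B:ℂ)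
    else if (i : ℕ) = (j : ℕ) + 1 then -((k : ℂ) - ((j:ℕ):ℂ)) * (B:ℂ)
    else 0

private lemma Pab_deriv (a b : ℕ) :
    (1 + X^2) * derivative (Pab a b)
      = (C I * C ((a:ℂ) - b) + C ((a:ℂ) + b) * X) * Pab a b := by
  have hI : (C I : Polynomial ℂ) * C I = -1 := by
    rw [← C_mul, Complex.I_mul_I, map_neg, map_one]
  have hx : (1 + X^2 : Polynomial ℂ) = (1 + C I * X) * (1 - C I * X) := by
    linear_combination (X^2 : Polynomial ℂ) * hI
  induction a with
  | zero =>
    induction b with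
    | zero => simp [Pab]
    | succ b ih =>
      have hP : Pab 0 (b+1) = (1 - C I * X) * Pab 0 b := by
        simp [Pab, pow_succ]; ring
      rw [hP, derivative_mul]
      simp only [derivative_sub, derivative_one, derivative_mul, derivative_C, derivative_X,
        map_sub, map_add, map_natCast, map_one, Nat.cast_zero, Nat.cast_succ] at ih ⊢
      rw [hx]
      linear_combination (1 - C I * X) * ih - X * Pab 0 b * (1 - C I * X) * hI
        - (1 - C I * X) * X^2 * derivative (Pab 0 b) * hI
  | succ a ih =>
    have hP : Pab (a+1) b = (1 + C I * X) * Pab a b := by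
      simp [Pab, pow_succ]; ring
    rw [hP, derivative_mul]
    simp only [derivative_add, derivative_one, derivative_mul, derivative_C, derivative_X,
      map_sub, map_add, map_natCast, map_one, Nat.cast_succ] at ih ⊢
    rw [hx]
    linear_combination (1 + C I * X) * ih - X * Pab a b * (1 + C I * X) * hI
      - (1 + C I * X) * X^2 * derivative (Pab a b) * hI

private lemma Pab_natDegree_le (a b : ℕ) : (Pab a b).natDegree ≤ a + b := by
  have h1 : (1 + C I * X : Polynomial ℂ).natDegree ≤ 1 :=
    natDegree_add_le_of_degree_le (by simp) (by simp)
  have h2 : (1 - C I * X : Polynomial ℂ).natDegree ≤ 1 :=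
    (natDegree_sub_le _ _).trans
      (max_le (by simp) ((natDegree_C_mul_le I X).trans (by simp)))
  calc (Pab a b).natDegree ≤ ((1 + C I * X : Polynomial ℂ)^a).natDegree
        + ((1 - C I * X : Polynomial ℂ)^b).natDegree := natDegree_mul_le
    _ ≤ a * 1 + b * 1 := by
        gcongr <;> exact natDegree_pow_le_of_le _ ‹_›
    _ = a + b := by ring

private lemma Pab_coeff_zero (a b : ℕ) :
    (Pab a b).coeff 1 = I * ((a:ℂ) - b) * (Pab a b).coeff 0 := by
  have h := congrArg (fun p => coeff p 0) (Pab_deriv a b)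
  simp only [add_mul, one_mul, coeff_add, coeff_C_mul, coeff_derivative, mul_assoc,
    mul_coeff_zero, coeff_X_zero, coeff_C_zero, sq, Nat.cast_zero] at h
  linear_combination h

private lemma Pab_coeff_succ (a b m : ℕ) :
    ((m:ℂ)+2) * (Pab a b).coeff (m+2)
      = I * ((a:ℂ) - b) * (Pab a b).coeff (m+1) + (((a:ℂ)+b) - m) * (Pab a b).coeff m := by
  have h := congrArg (fun p => coeff p (m+1)) (Pab_deriv a b)
  simp only [add_mul, one_mul, coeff_add, coeff_C_mul, coeff_derivative, mul_assoc,
    coeff_X_mul] at h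
  cases m with
  | zero =>
    rw [show (1:ℕ) = 0 + 1 from rfl, coeff_X_pow_mul'] at h
    norm_num at h
    linear_combination h
  | succ m' =>
    rw [show m' + 1 + 1 = m' + 2 from rfl, coeff_X_pow_mul, coeff_derivative] at h
    push_cast at h ⊢
    linear_combination h

private lemma mulVec_eigen (k j : ℕ) (hj : j ≤ k) (A B : ℝ) :
    (Mc k A B).mulVec (fun x : Fin (k+1) => (Pab (k-j) j).coeff x)
      = ((A:ℂ) + I*(B:ℂ)*((k:ℂ) - 2*j)) • (fun x : Fin (k+1) => (Pab (k-j) j).coeff x) := by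
  set v : ℕ → ℂ := fun n => (Pab (k-j) j).coeff n with hvdef
  have hkj : ((k-j:ℕ):ℂ) = (k:ℂ) - (j:ℂ) := by push_cast [hj]; ring
  have h0 : v 1 = I*((k:ℂ)-2*(j:ℂ)) * v 0 := by
    have := Pab_coeff_zero (k-j) j; rw [hkj] at this
    simpa [hvdef] using by linear_combination this
  have hs : ∀ m : ℕ, ((m:ℂ)+2) * v (m+2)
      = I*((k:ℂ)-2*(j:ℂ)) * v (m+1) + ((k:ℂ) - (m:ℂ)) * v m := by
    intro m
    have := Pab_coeff_succ (k-j) j m; rw [hkj] at this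
    have h2 : ((k:ℂ) - j) + j = (k:ℂ) := by ring
    calc ((m:ℂ)+2) * v (m+2) = I * (((k:ℂ)-j) - j) * v (m+1) + ((((k:ℂ)-j)+j) - m) * v m := this
      _ = I*((k:ℂ)-2*(j:ℂ)) * v (m+1) + ((k:ℂ) - (m:ℂ)) * v m := by ring
  have hv : ∀ n : ℕ, k < n → v n = 0 := by
    intro n hn
    exact coeff_eq_zero_of_natDegree_lt (lt_of_le_of_lt (by simpa [Nat.sub_add_cancel hj] using Pab_natDegree_le (k-j) j) hn)
  funext i
  have hile : (i:ℕ) < k + 1 := i.isLt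
  show ∑ x : Fin (k+1), Mc k A B i x * v (x:ℕ) = _
  have hsum : ∑ x : Fin (k+1), Mc k A B i x * v (x:ℕ)
      = ∑ n ∈ Finset.range (k+1), ((if (i:ℕ) = n then (A:ℂ)
        else if n = (i:ℕ) + 1 then (((i:ℕ):ℂ) + 1) * (B:ℂ)
        else if (i:ℕ) = n + 1 then -((k : ℂ) - (n:ℂ)) * (B:ℂ)
        else 0) * v n) := by
    rw [← Fin.sum_univ_eq_sum_range (fun n => ((if (i:ℕ) = n then (A:ℂ)
        else if n = (i:ℕ) + 1 then (((i:ℕ):ℂ) + 1) * (B:ℂ)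
        else if (i:ℕ) = n + 1 then -((k : ℂ) - (n:ℂ)) * (B:ℂ)
        else 0) * v n)) (k+1)]
    rfl
  rw [hsum]
  have hsplit : ∀ n : ℕ, ((if (i:ℕ) = n then (A:ℂ)
        else if n = (i:ℕ) + 1 then (((i:ℕ):ℂ) + 1) * (B:ℂ)
        else if (i:ℕ) = n + 1 then -((k : ℂ) - (n:ℂ)) * (B:ℂ)
        else 0) * v n)
      = (if n = (i:ℕ) then (A:ℂ) * v n else 0)
        + (if n = (i:ℕ)+1 then (((i:ℕ):ℂ) + 1) * (B:ℂ) * v n else 0)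
        + (if (i:ℕ) = n+1 then -((k : ℂ) - (n:ℂ)) * (B:ℂ) * v n else 0) := by
    intro n
    split_ifs <;> first | omega | ring
  simp only [hsplit]
  rw [Finset.sum_add_distrib, Finset.sum_add_distrib, Finset.sum_ite_eq' (Finset.range (k+1)),
    Finset.sum_ite_eq' (Finset.range (k+1))]
  have e1 : (if (i:ℕ) ∈ Finset.range (k+1) then (A:ℂ) * v (i:ℕ) else 0) = (A:ℂ) * v (i:ℕ) := by
    rw [if_pos (Finset.mem_range.2 hile)]
  have e2 : (if (i:ℕ)+1 ∈ Finset.range (k+1) then (((i:ℕ):ℂ) + 1) * (B:ℂ) * v ((i:ℕ)+1) else 0)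
      = (((i:ℕ):ℂ) + 1) * (B:ℂ) * v ((i:ℕ)+1) := by
    split_ifs with h
    · rfl
    · rw [hv ((i:ℕ)+1) (by simp at h; omega), mul_zero]
  rw [e1, e2]
  rcases hi0 : (i:ℕ) with _ | m
  · have e3 : (∑ n ∈ Finset.range (k+1), if (0:ℕ) = n+1 then -((k : ℂ) - (n:ℂ)) * (B:ℂ) * v n else 0) = 0 :=
      Finset.sum_eq_zero (fun n _ => by simp)
    rw [e3]
    simp only [Pi.smul_apply, smul_eq_mul, hi0, Nat.cast_zero]
    push_cast
    linear_combination (B:ℂ) * h0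
  · have e3 : (∑ n ∈ Finset.range (k+1), if m+1 = n+1 then -((k : ℂ) - (n:ℂ)) * (B:ℂ) * v n else 0)
        = -((k : ℂ) - (m:ℂ)) * (B:ℂ) * v m := by
      have : ∀ n : ℕ, (if m+1 = n+1 then -((k : ℂ) - (n:ℂ)) * (B:ℂ) * v n else 0)
          = (if n = m then -((k : ℂ) - (n:ℂ)) * (B:ℂ) * v n else 0) := by
        intro n; split_ifs <;> first | omega | rfl
      rw [Finset.sum_congr rfl (fun n _ => this n), Finset.sum_ite_eq' (Finset.range (k+1))]
      rw [if_pos (Finset.mem_range.2 (by omega))]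
    rw [e3]
    simp only [Pi.smul_apply, smul_eq_mul, hi0]
    push_cast
    linear_combination (B:ℂ) * hs m

private lemma eval_charpoly' {n : ℕ} (M : Matrix (Fin n) (Fin n) ℂ) (μ : ℂ) :
    M.charpoly.eval μ = (μ • (1 : Matrix (Fin n) (Fin n) ℂ) - M).det := by
  rw [Matrix.charpoly, ← coe_evalRingHom, RingHom.map_det]
  congr 1
  ext i j
  by_cases h : i = j
  · subst h
    simp [Matrix.charmatrix_apply_eq, Matrix.one_apply]
  · simp [Matrix.charmatrix_apply_ne _ _ _ h, Matrix.one_apply, h]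

private lemma eigen_root (k j : ℕ) (hj : j ≤ k) (A B : ℝ) :
    ((( (A:ℂ) + I*(B:ℂ)*((k:ℂ) - 2*j)) • (1 : Matrix (Fin (k+1)) (Fin (k+1)) ℂ)
        - Mc k A B)).det = 0 := by
  set μ := (A:ℂ) + I*(B:ℂ)*((k:ℂ) - 2*j)
  set w : Fin (k+1) → ℂ := fun x => (Pab (k-j) j).coeff x with hw
  have hw0 : w 0 = 1 := by
    simp [hw, Pab, coeff_zero_eq_eval_zero]
  rw [← Matrix.exists_mulVec_eq_zero_iff]
  refine ⟨w, fun h => ?_, ?_⟩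
  · rw [h] at hw0; simp at hw0
  · rw [Matrix.sub_mulVec, Matrix.smul_mulVec, Matrix.one_mulVec, mulVec_eigen k j hj A B,
      sub_self]

private lemma charpoly_eq (k : ℕ) (A B : ℝ) (hB : B ≠ 0) :
    (Mc k A B).charpoly
      = ∏ j ∈ Finset.range (k+1), (X - C ((A:ℂ) + I*(B:ℂ)*((k:ℂ) - 2*j))) := by
  set s : ℕ → ℂ := fun j => (A:ℂ) + I*(B:ℂ)*((k:ℂ) - 2*j) with hs
  have hinj : Function.Injective s := by
    intro a b hab
    have hIB : (I*(B:ℂ)) ≠ 0 := by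
      simp [Complex.ext_iff, hB]
    simp only [hs] at hab
    replace hab : (a:ℂ) = b ∨ I*(B:ℂ) = 0 := Or.inl (by
      have := mul_left_cancel₀ hIB (add_left_cancel hab)
      linear_combination (-1/2:ℂ) * this)
    rcases hab with h | h
    · exact_mod_cast h
    · exact absurd h (by simp [Complex.ext_iff, hB])
  have hmono : (∏ j ∈ Finset.range (k+1), (X - C (s j))).Monic :=
    monic_prod_of_monic _ _ (fun j _ => monic_X_sub_C _)
  have hdeg : (∏ j ∈ Finset.range (k+1), (X - C (s j))).natDegree = k+1 := by
    rw [natDegree_prod _ _ (fun j _ => X_sub_C_ne_zero _)]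
    simp [natDegree_X_sub_C]
  have hdvd : (∏ j ∈ Finset.range (k+1), (X - C (s j))) ∣ (Mc k A B).charpoly := by
    apply Finset.prod_dvd_of_coprime
    · exact (pairwise_coprime_X_sub_C hinj).set_pairwise _
    · intro j hj
      rw [dvd_iff_isRoot]
      show eval _ _ = 0
      rw [eval_charpoly']
      exact eigen_root k j (by simpa using Nat.lt_succ_iff.mp (Finset.mem_range.mp hj)) A B
  exact eq_of_monic_of_dvd_of_natDegree_le hmono (Matrix.charpoly_monic _) hdvd
    (by rw [hdeg, Matrix.charpoly_natDegree_eq_dim, Fintype.card_fin])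

private lemma det_Mc (k : ℕ) (A B : ℝ) (hB : B ≠ 0) (lam : ℂ) :
    (Mc k A B - lam • (1 : Matrix (Fin (k+1)) (Fin (k+1)) ℂ)).det
      = ∏ j ∈ Finset.range (k+1), (((A:ℂ) - lam) + I*(B:ℂ)*((k:ℂ) - 2*j)) := by
  have h1 : Mc k A B - lam • 1 = -(lam • (1 : Matrix (Fin (k+1)) (Fin (k+1)) ℂ) - Mc k A B) := by
    rw [neg_sub]
  rw [h1, Matrix.det_neg, ← eval_charpoly', charpoly_eq k A B hB, eval_prod]
  simp only [eval_sub, eval_X, eval_C, Fintype.card_fin]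
  have : ((-1 : ℂ)) ^ (k+1) = ∏ _j ∈ Finset.range (k+1), (-1 : ℂ) := by
    rw [Finset.prod_const, Finset.card_range]
  rw [this, ← Finset.prod_mul_distrib]
  exact Finset.prod_congr rfl (fun j _ => by ring)

private lemma prod_pair (n : ℕ) (x c : ℂ) :
    ∏ j ∈ Finset.range (2*n+1), (x + c * (2*(n:ℂ) - 2*(j:ℂ)))
      = x * ∏ m ∈ Finset.range n, (x^2 - (c*(2*((m:ℂ)+1)))^2) := by
  induction n with
  | zero => simp
  | succ n ih =>
    have h1 : 2*(n+1)+1 = (2*n+1) + 1 + 1 := by ring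
    rw [h1, Finset.prod_range_succ, Finset.prod_range_succ']
    have h2 : ∀ j ∈ Finset.range (2*n+1),
        (x + c * (2*((n:ℂ)+1) - 2*((j:ℂ)+1))) = (x + c * (2*(n:ℂ) - 2*(j:ℂ))) := by
      intro j _; ring
    push_cast
    rw [Finset.prod_congr rfl h2, ih, Finset.prod_range_succ]
    push_cast
    ring

/-- For even `k`,
`det(M0 − λI) = (A−λ)·((A−λ)² + (2B)²)((A−λ)² + (4B)²)⋯((A−λ)² + (kB)²)`. -/
theorem det_M0_sub_smul_one_even (k : ℕ) (hk : Even k) (A B : ℝ) (lam : ℝ) :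
    (M0 k A B - lam • (1 : Matrix (Fin (k+1)) (Fin (k+1)) ℝ)).det
      = (A - lam) * ∏ m ∈ Finset.range (k/2), ((A - lam)^2 + ((2*((m:ℝ)+1)) * B)^2) := by
  obtain ⟨n, hn⟩ := hk
  have hk2 : k = 2*n := by omega
  have hdiv : k/2 = n := by omega
  by_cases hB : B = 0
  · subst hB
    have hone : ∀ i j : Fin (k+1), (1 : Matrix (Fin (k+1)) (Fin (k+1)) ℝ) i j
        = if (i:ℕ) = (j:ℕ) then 1 else 0 := by
      intro i j; simp [Matrix.one_apply, Fin.ext_iff]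
    have h1 : M0 k A 0 - lam • (1 : Matrix (Fin (k+1)) (Fin (k+1)) ℝ) = (A - lam) • 1 := by
      ext i j
      simp only [M0, Matrix.sub_apply, Matrix.smul_apply, hone, Matrix.one_apply, Fin.ext_iff,
        smul_eq_mul]
      split_ifs <;> first | omega | ring
    rw [h1, Matrix.smul_one_eq_diagonal, Matrix.det_diagonal]
    rw [Finset.prod_const, Finset.card_fin]
    have h2 : ∀ m ∈ Finset.range (k/2), ((A-lam)^2 + ((2*((m:ℝ)+1)) * 0)^2) = (A-lam)^2 := by
      intro m _; ring
    rw [Finset.prod_congr rfl h2, Finset.prod_const, Finset.card_range, hdiv, ← pow_mul,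
      ← pow_succ']
    congr 1
    omega
  · -- complex route
    have hmap : (Complex.ofRealHom.mapMatrix (M0 k A B - lam • (1 : Matrix (Fin (k+1)) (Fin (k+1)) ℝ)))
        = Mc k A B - (lam:ℂ) • 1 := by
      have hone : ∀ (R : Type) [Field R] (i j : Fin (k+1)), (1 : Matrix (Fin (k+1)) (Fin (k+1)) R) i j
          = if (i:ℕ) = (j:ℕ) then 1 else 0 := by
        intro R _ i j; simp [Matrix.one_apply, Fin.ext_iff]
      ext i j
      simp only [RingHom.mapMatrix_apply, Matrix.map_apply, Matrix.sub_apply, Matrix.smul_apply,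
        hone, M0, Mc, smul_eq_mul, Complex.ofRealHom_eq_coe]
      split_ifs <;> push_cast <;> ring
    have hdet : ((M0 k A B - lam • (1 : Matrix (Fin (k+1)) (Fin (k+1)) ℝ)).det : ℂ)
        = (Mc k A B - (lam:ℂ) • 1).det := by
      rw [← hmap, ← RingHom.map_det]
      rfl
    have key : (Mc k A B - (lam:ℂ) • 1).det
        = (((A - lam) * ∏ m ∈ Finset.range (k/2), ((A - lam)^2 + ((2*((m:ℝ)+1)) * B)^2) : ℝ) : ℂ) := by
      rw [det_Mc k A B hB (lam:ℂ), show k+1 = 2*n+1 from by omega]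
      have h3 : ∀ j ∈ Finset.range (2*n+1), (((A:ℂ) - lam) + I*(B:ℂ)*((k:ℂ) - 2*j))
          = (((A:ℂ) - lam) + (I*(B:ℂ)) * (2*(n:ℂ) - 2*(j:ℂ))) := by
        intro j _
        rw [hk2]; push_cast; ring
      rw [Finset.prod_congr rfl h3, prod_pair n ((A:ℂ) - lam) (I*(B:ℂ)), hdiv]
      push_cast
      congr 1
      refine Finset.prod_congr rfl (fun m _ => ?_)
      linear_combination (-(2*((m:ℂ)+1)*(B:ℂ))^2) * Complex.I_sq
    rw [key] at hdet
    exact_mod_cast hdet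

end
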